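/- Let ψ be a predicate on ℤ^d and let npe = Σ_{(p,a,b)∈Λ} p·n^a·b^n be a normalized poly-exponential expression, where Λ is a finite set of triples consisting of a monomial p with rational coefficient in x1,...,xd and numbers a ∈ ℕ, b ∈ ℕ_{≥1}. Let Δ, Γ ⊆ Λ be disjoint subsets such that for every e ∈ ℤ^d satisfying ψ: p(e) > 0 for all (p,a,b) ∈ Δ, and p(e) ≤ 0 for all (p,a,b) ∈ Γ. For each (p,a,b) ∈ Δ∪Γ choose i_{(p,a,b)}, j_{(p,a,b)} ∈ ℕ such that (j_{(p,a,b)}, i_{(p,a,b)}) >lex (b,a) if (p,a,b) ∈ Δ, and (b,a) >lex (j_{(p,a,b)}, i_{(p,a,b)}) if (p,a,b) ∈ Γ. Define the over-approximation ⌈npe⌉_ψ^{Δ,Γ} = Σ_{(p,a,b)∈Δ∪Γ} p·n^{i_{(p,a,b)}}·j_{(p,a,b)}^n + Σ_{(p,a,b)∈Λ∖(Δ∪Γ)} p·n^a·b^n, and let D be the maximum (0 if Δ∪Γ = ∅) of the 1-monotonicity thresholds of (j_{(p,a,b)}, i_{(p,a,b)}) and (b,a) over (p,a,b) ∈ Δ,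 together with the 1-monotonicity thresholds of (b,a) and (j_{(p,a,b)}, i_{(p,a,b)}) over (p,a,b) ∈ Γ. Then for every e ∈ ℤ^d satisfying ψ and every natural number n ≥ D: the value of ⌈npe⌉_ψ^{Δ,Γ} at (e, n) is greater than or equal to the value of npe at (e, n). -/

import Mathlib

open scoped Classical

noncomputable section

namespace Koat

/-! ### Formulas over polynomial atoms `p < q` -/

inductive Fml (V : Type*) where
  | lt  : MvPolynomial V ℤ → MvPolynomial V ℤ → Fml V
  | and : Fml V → Fml V → Fml V
  | or  : Fml V → Fml V → Fml V

namespace Fml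

variable {V : Type*}

/-- A formula holds in a state `σ : V → ℤ`. -/
def holds (σ : V → ℤ) : Fml V → Prop
  | .lt p q  => MvPolynomial.eval σ p < MvPolynomial.eval σ q
  | .and f g => holds σ f ∧ holds σ g
  | .or f g  => holds σ f ∨ holds σ g

/-- Applying an update `η` to a formula (substituting `η v` for each variable `v`). -/
def subst (η : V → MvPolynomial V ℤ) : Fml V → Fml V
  | .lt p q  => .lt (MvPolynomial.bind₁ η p) (MvPolynomial.bind₁ η q)
  | .and f g => .and (subst η f) (subst η g)
  | .or f g  => .or (subst η f) (subst η g)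

/-- The variables occurring in a formula. -/
def vars : Fml V → Finset V
  | .lt p q  => p.vars ∪ q.vars
  | .and f g => vars f ∪ vars g
  | .or f g  => vars f ∪ vars g

/-- The list of atoms `(s₁, s₂)` (meaning `s₁ < s₂`) occurring in a formula. -/
def atoms : Fml V → List (MvPolynomial V ℤ × MvPolynomial V ℤ)
  | .lt p q  => [(p, q)]
  | .and f g => atoms f ++ atoms g
  | .or f g  => atoms f ++ atoms g

end Fml

/-! ### Bounds -/

/-- The set `𝓑` of bounds: built from `ℕ ∪ {ω}`, variables, `+`, `·`, `k^{·}`. -/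
inductive Bnd (V : Type*) where
  | const : ℕ∞ → Bnd V
  | var : V → Bnd V
  | add : Bnd V → Bnd V → Bnd V
  | mul : Bnd V → Bnd V → Bnd V
  | exp : ℕ → Bnd V → Bnd V

/-- `k ^ e` for `e : ℕ∞`. -/
def epow (k : ℕ) (e : ℕ∞) : ℕ∞ := if e = ⊤ then ⊤ else ((k ^ e.toNat : ℕ) : ℕ∞)

namespace Bnd

variable {V : Type*}

/-- Evaluation of a bound in a (non-negative) state, with values in `ℕ ∪ {ω}`. -/
def eval (σ : V → ℕ) : Bnd V → ℕ∞
  | .const c => c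
  | .var v => (σ v : ℕ∞)
  | .add b₁ b₂ => eval σ b₁ + eval σ b₂
  | .mul b₁ b₂ => eval σ b₁ * eval σ b₂
  | .exp k b => epow k (eval σ b)

/-- `b [v / f v | v ∈ PV]`: substitute the bound `f v` for every program variable `v ∈ PV`. -/
def substOn (PV : Set V) (f : V → Bnd V) : Bnd V → Bnd V
  | .const c => .const c
  | .var v => if v ∈ PV then f v else .var v
  | .add b₁ b₂ => .add (substOn PV f b₁) (substOn PV f b₂)
  | .mul b₁ b₂ => .mul (substOn PV f b₁) (substOn PV f b₂)
  | .exp k b => .exp k (substOn PV f b)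

end Bnd

/-- The sum of a list of bounds. -/
def bndSum {V : Type*} (l : List (Bnd V)) : Bnd V := l.foldr Bnd.add (Bnd.const 0)

/-! ### Integer programs -/

/-- A transition `(ℓ, φ, η, ℓ')`. -/
structure Trans (L V : Type*) where
  src : L
  guard : Fml V
  update : V → MvPolynomial V ℤ
  tgt : L

/-- A configuration `(ℓ, σ)`. -/
abbrev Config (L V : Type*) := L × (V → ℤ)

/-- The evaluation step `(ℓ, σ) →_t (ℓ', σ')`: program variables are updated by `t.update`,
temporary variables (those outside `PV`) get arbitrary values. -/
def Step {L V : Type*} (PV : Set V) (t : Trans L V) (c c' : Config L V) : Prop :=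
  c.1 = t.src ∧ c'.1 = t.tgt ∧ t.guard.holds c.2 ∧
    ∀ v ∈ PV, c'.2 v = MvPolynomial.eval c.2 (t.update v)

/-- `→_S`, the union of `→_t` over `t ∈ S`. -/
def StepAny {L V : Type*} (PV : Set V) (S : Finset (Trans L V)) :
    Config L V → Config L V → Prop :=
  fun c c' => ∃ t ∈ S, Step PV t c c'

/-- `k`-fold composition of a relation. -/
def relPow {α : Type*} (R : α → α → Prop) : ℕ → α → α → Prop
  | 0 => Eq
  | n + 1 => Relation.Comp (relPow R n) R

/-- `→*_S ∘ →_t`. -/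
def starThen {L V : Type*} (PV : Set V) (S : Finset (Trans L V)) (t : Trans L V) :
    Config L V → Config L V → Prop :=
  Relation.Comp (Relation.ReflTransGen (StepAny PV S)) (Step PV t)

/-- `|σ|`, the state of absolute values. -/
def absState {V : Type*} (σ : V → ℤ) : V → ℕ := fun v => (σ v).natAbs

/-- `RB` is a global runtime bound for the program `(PV, L, ℓ₀, T)`. -/
def IsGlobalRB {L V : Type*} (PV : Set V) (ℓ₀ : L) (T : Finset (Trans L V))
    (RB : Trans L V → Bnd V) : Prop :=
  ∀ t ∈ T, ∀ σ₀ : V → ℤ,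
    (⨆ k ∈ {k : ℕ | ∃ c' : Config L V, relPow (starThen PV T t) k (ℓ₀, σ₀) c'}, (k : ℕ∞))
      ≤ (RB t).eval (absState σ₀)

/-- `SB` is a size bound for the program `(PV, L, ℓ₀, T)`. -/
def IsSizeBound {L V : Type*} (PV : Set V) (ℓ₀ : L) (T : Finset (Trans L V))
    (SB : Trans L V → V → Bnd V) : Prop :=
  ∀ t ∈ T, ∀ v ∈ PV, ∀ σ₀ : V → ℤ,
    (⨆ s ∈ {s : ℕ | ∃ c' : Config L V, starThen PV T t (ℓ₀, σ₀) c' ∧ s = (c'.2 v).natAbs},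
      (s : ℕ∞)) ≤ (SB t v).eval (absState σ₀)

/-- The entry transitions `E_{T'}`. -/
def entrySet {L V : Type*} (T T' : Finset (Trans L V)) : Set (Trans L V) :=
  {t | t ∈ T ∧ t ∉ T' ∧ ∃ t' ∈ T', t'.src = t.tgt}

/-- `RB` is a local runtime bound for `T'gt` w.r.t. `T'` in the program `(PV, L, ℓ₀, T)`. -/
def IsLocalRB {L V : Type*} (PV : Set V) (ℓ₀ : L) (T T'gt T' : Finset (Trans L V))
    (RB : Trans L V → Bnd V) : Prop :=
  ∀ t ∈ T'gt, ∀ r ∈ entrySet T T', ∀ σ : V → ℤ,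
    (⨆ k ∈ {k : ℕ | ∃ (σ₀ : V → ℤ) (c' : Config L V),
        starThen PV T r (ℓ₀, σ₀) (r.tgt, σ) ∧ relPow (starThen PV T' t) k (r.tgt, σ) c'},
      (k : ℕ∞)) ≤ (RB r).eval (absState σ)

/-- Chaining two transitions: `t₁ ⋆ t₂`. -/
def chain2 {L V : Type*} (t₁ t₂ : Trans L V) : Trans L V :=
  ⟨t₁.src, (t₁.guard).and (t₂.guard.subst t₁.update),
    fun v => MvPolynomial.bind₁ t₁.update (t₂.update v), t₂.tgt⟩

/-- Chaining a (nonempty) list of transitions `t₁ ⋆ ⋯ ⋆ tₙ` (with a default for `[]`). -/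
def chainFold {L V : Type*} (dflt : Trans L V) : List (Trans L V) → Trans L V
  | [] => dflt
  | t :: ts => ts.foldl chain2 t

/-- The composed evaluation relation `→_{t₁} ∘ ⋯ ∘ →_{tₙ}`. -/
def stepsList {L V : Type*} (PV : Set V) : List (Trans L V) → Config L V → Config L V → Prop
  | [] => Eq
  | t :: ts => Relation.Comp (Step PV t) (stepsList PV ts)

/-! ### Twn-loops -/

/-- An update `η` as a function on states `ℤ^d → ℤ^d`. -/
def updFun {d : ℕ} (η : Fin d → MvPolynomial (Fin d) ℤ) (σ : Fin d → ℤ) : Fin d → ℤ :=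
  fun i => MvPolynomial.eval σ (η i)

/-- `η` is triangular weakly non-linear with data `c`, `p`:
`η xᵢ = cᵢ·xᵢ + pᵢ` with `pᵢ ∈ ℤ[x_{i+1},…,x_d]`. -/
def IsTriangular {d : ℕ} (η : Fin d → MvPolynomial (Fin d) ℤ) (c : Fin d → ℤ)
    (p : Fin d → MvPolynomial (Fin d) ℤ) : Prop :=
  ∀ i, η i = MvPolynomial.C (c i) * MvPolynomial.X i + p i ∧ ∀ j ∈ (p i).vars, i < j

/-- Triangular weakly non-linear update. -/
def IsTWN {d : ℕ} (η : Fin d → MvPolynomial (Fin d) ℤ) : Prop :=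
  ∃ c p, IsTriangular η c p

/-- Triangular weakly non-linear update with non-negative coefficients. -/
def IsTNN {d : ℕ} (η : Fin d → MvPolynomial (Fin d) ℤ) : Prop :=
  ∃ c p, IsTriangular η c p ∧ ∀ i, 0 ≤ c i

/-- `(b₁,a₁) >_lex (b₂,a₂)`. -/
def lexGt (b₁ a₁ b₂ a₂ : ℕ) : Prop := b₂ < b₁ ∨ (b₁ = b₂ ∧ a₂ < a₁)

/-- The set of all valid `k`-monotonicity thresholds of `(b₁,a₁)` and `(b₂,a₂)`. -/
def mthSet (k b₁ a₁ b₂ a₂ : ℕ) : Set ℕ :=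
  {n₀ | ∀ n ≥ n₀, k * (n ^ a₂ * b₂ ^ n) < n ^ a₁ * b₁ ^ n}

/-- The `k`-monotonicity threshold of `(b₁,a₁)` and `(b₂,a₂)` (the smallest member of
`mthSet`, when it exists). -/
def mth (k b₁ a₁ b₂ a₂ : ℕ) : ℕ := sInf (mthSet k b₁ a₁ b₂ a₂)

/-- `M_j` as in the paper. -/
def Mdef (b a : ℕ → ℕ) (j : ℕ) : ℕ :=
  if b j = b (j - 1) then 0 else mth 1 (b j) (a j) (b (j - 1)) (a (j - 1) + 1)

/-- `N_j` as in the paper. -/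
def Ndef (b a : ℕ → ℕ) (j : ℕ) : ℕ :=
  if j = 2 then 1
  else if j = 3 then mth 1 (b 2) (a 2) (b 1) (a 1)
  else
    max ((Finset.Icc 1 (j - 3)).sup fun i => mth 1 (b (j - 2)) (a (j - 2)) (b i) (a i))
      (mth (j - 2) (b (j - 1)) (a (j - 1)) (b (j - 2)) (a (j - 2)))

/-- The over-approximation `⊔ {p j | j ∈ s}`: each monomial gets the maximal absolute value
of its coefficients in the `p j`. -/
def sqcupF {d : ℕ} {ι : Type*} (s : Finset ι) (p : ι → MvPolynomial (Fin d) ℤ) :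
    MvPolynomial (Fin d) ℤ :=
  ∑ m ∈ s.biUnion fun j => (p j).support,
    MvPolynomial.monomial m (((s.sup fun j => ((p j).coeff m).natAbs : ℕ) : ℤ))

/-- Normalized poly-exponential expressions, as finite (formal) sums of
`p · n^a · b^n` with `p ∈ ℚ[x₁,…,x_d]`. -/
abbrev NPE (d : ℕ) := List (MvPolynomial (Fin d) ℚ × ℕ × ℕ)

/-- The value of a normalized poly-exponential expression at `(e, n)`. -/
def evalNPE {d : ℕ} (l : NPE d) (e : Fin d → ℤ) (n : ℕ) : ℚ :=
  (l.map fun tr =>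
    MvPolynomial.eval (fun i => (e i : ℚ)) tr.1 * (n : ℚ) ^ tr.2.1 * (tr.2.2 : ℚ) ^ n).sum


lemma mthSet_nonempty (b1 a1 b2 a2 : ℕ) (hb1 : 1 ≤ b1) (h : lexGt b1 a1 b2 a2) :
    (mthSet 1 b1 a1 b2 a2).Nonempty := by
  rcases h with h | ⟨rfl, h⟩
  · -- b2 < b1
    have hb1R : (0:ℝ) < (b1:ℝ) := by exact_mod_cast hb1
    have hr : (b2:ℝ)/b1 < 1 := (div_lt_one hb1R).2 (by exact_mod_cast h)
    have h0 : (0:ℝ) ≤ (b2:ℝ)/b1 := by positivity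
    have hT := tendsto_pow_const_mul_const_pow_of_lt_one a2 h0 hr
    have hev : ∀ᶠ n : ℕ in Filter.atTop, (n:ℝ)^a2 * ((b2:ℝ)/b1)^n < 1 :=
      Filter.Tendsto.eventually_lt_const one_pos hT
    obtain ⟨n₀, hn₀⟩ := (hev.and (Filter.eventually_ge_atTop 1)).exists_forall_of_atTop
    refine ⟨n₀, fun n hn => ?_⟩
    obtain ⟨hlt, hn1⟩ := hn₀ n hn
    have hR : (n:ℝ) ^ a2 * (b2:ℝ) ^ n < (n:ℝ) ^ a1 * (b1:ℝ) ^ n := by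
      have hb1n : (0:ℝ) < (b1:ℝ) ^ n := pow_pos hb1R n
      have h1 : (n:ℝ) ^ a2 * (b2:ℝ) ^ n < (b1:ℝ) ^ n := by
        have := (mul_lt_mul_iff_left₀ hb1n).2 hlt
        rwa [one_mul, mul_assoc, div_pow, div_mul_cancel₀] at this
        exact ne_of_gt hb1n
      have h2 : (1:ℝ) ≤ (n:ℝ) ^ a1 := one_le_pow₀ (by exact_mod_cast hn1)
      nlinarith [pow_pos hb1R n]
    rw [one_mul]
    exact_mod_cast (by push_cast; exact hR : ((n ^ a2 * b2 ^ n : ℕ) : ℝ) < ((n ^ a1 * b1 ^ n : ℕ) : ℝ))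
  · refine ⟨2, fun n hn => ?_⟩
    have hn1 : 1 < n := by omega
    have hpow : n ^ a2 < n ^ a1 := Nat.pow_lt_pow_right hn1 h
    have hb : 0 < b1 ^ n := Nat.pow_pos hb1
    calc 1 * (n ^ a2 * b1 ^ n) = n ^ a2 * b1 ^ n := one_mul _
    _ < n ^ a1 * b1 ^ n := (Nat.mul_lt_mul_right hb).2 hpow

lemma mth_spec (b1 a1 b2 a2 : ℕ) (hb1 : 1 ≤ b1) (h : lexGt b1 a1 b2 a2) :
    ∀ n ≥ mth 1 b1 a1 b2 a2, n ^ a2 * b2 ^ n < n ^ a1 * b1 ^ n := by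
  have hmem : mth 1 b1 a1 b2 a2 ∈ mthSet 1 b1 a1 b2 a2 :=
    Nat.sInf_mem (mthSet_nonempty b1 a1 b2 a2 hb1 h)
  intro n hn
  simpa using hmem n hn

/-- soundness of the over-approximation `⌈npe⌉_ψ^{Δ,Γ}` of a normalized
poly-exponential expression: for all `e ⊨ ψ` and all `n ≥ D`, the value of the
over-approximation at `(e,n)` is at least the value of `npe` at `(e,n)`. -/
theorem overapprox_npe_sound {d : ℕ} {ι : Type*} (ψ : (Fin d → ℤ) → Prop)
    (Λ Δ Γ : Finset ι) (p : ι → MvPolynomial (Fin d) ℚ) (av bv iv jv : ι → ℕ)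
    (hmono : ∀ l ∈ Λ, ∃ (c : ℚ) (m : Fin d →₀ ℕ), p l = MvPolynomial.monomial m c)
    (hb : ∀ l ∈ Λ, 1 ≤ bv l)
    (hΔΛ : Δ ⊆ Λ) (hΓΛ : Γ ⊆ Λ) (hdisj : Disjoint Δ Γ)
    (hΔpos : ∀ e : Fin d → ℤ, ψ e → ∀ l ∈ Δ,
      0 < MvPolynomial.eval (fun i => (e i : ℚ)) (p l))
    (hΓnonpos : ∀ e : Fin d → ℤ, ψ e → ∀ l ∈ Γ,
      MvPolynomial.eval (fun i => (e i : ℚ)) (p l) ≤ 0)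
    (hΔlex : ∀ l ∈ Δ, lexGt (jv l) (iv l) (bv l) (av l))
    (hΓlex : ∀ l ∈ Γ, lexGt (bv l) (av l) (jv l) (iv l))
    (e : Fin d → ℤ) (hψ : ψ e) (n : ℕ)
    (hn : max (Δ.sup fun l => mth 1 (jv l) (iv l) (bv l) (av l))
            (Γ.sup fun l => mth 1 (bv l) (av l) (jv l) (iv l)) ≤ n) :
    (∑ l ∈ Λ, MvPolynomial.eval (fun i => (e i : ℚ)) (p l) * (n : ℚ) ^ av l * (bv l : ℚ) ^ n)
      ≤ (∑ l ∈ Δ ∪ Γ,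
            MvPolynomial.eval (fun i => (e i : ℚ)) (p l) * (n : ℚ) ^ iv l * (jv l : ℚ) ^ n)
          + ∑ l ∈ Λ \ (Δ ∪ Γ),
              MvPolynomial.eval (fun i => (e i : ℚ)) (p l) * (n : ℚ) ^ av l * (bv l : ℚ) ^ n := by
  rw [← Finset.sum_sdiff (Finset.union_subset hΔΛ hΓΛ), add_comm]
  refine add_le_add_left (Finset.sum_le_sum fun l hl => ?_) _
  rcases Finset.mem_union.1 hl with hΔl | hΓl
  · have hc := hΔpos e hψ l hΔl
    have hbl : 1 ≤ bv l := hb l (hΔΛ hΔl)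
    have hlex := hΔlex l hΔl
    have hjl : 1 ≤ jv l := by rcases hlex with h | ⟨h, _⟩ <;> omega
    have hmth : mth 1 (jv l) (iv l) (bv l) (av l) ≤ n :=
      (Finset.le_sup hΔl).trans ((le_max_left _ _).trans hn)
    have hnat := mth_spec _ _ _ _ hjl hlex n hmth
    have hQ : (n : ℚ) ^ av l * (bv l : ℚ) ^ n ≤ (n : ℚ) ^ iv l * (jv l : ℚ) ^ n := by
      exact_mod_cast hnat.le
    rw [mul_assoc, mul_assoc]
    exact mul_le_mul_of_nonneg_left hQ hc.le
  · have hc := hΓnonpos e hψ l hΓl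
    have hbl : 1 ≤ bv l := hb l (hΓΛ hΓl)
    have hlex := hΓlex l hΓl
    have hmth : mth 1 (bv l) (av l) (jv l) (iv l) ≤ n :=
      (Finset.le_sup hΓl).trans ((le_max_right _ _).trans hn)
    have hnat := mth_spec _ _ _ _ hbl hlex n hmth
    have hQ : (n : ℚ) ^ iv l * (jv l : ℚ) ^ n ≤ (n : ℚ) ^ av l * (bv l : ℚ) ^ n := by
      exact_mod_cast hnat.le
    rw [mul_assoc, mul_assoc]
    exact mul_le_mul_of_nonpos_left hQ hc

end Koat
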